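/- arXiv:1906.08141 — 4 statements merged into one kernel-verified Lean document; each statement's English description precedes it below -/
import Mathlib

section
/- Let P, Q : [0,1] → ℝ² be curves and ε ≥ 0. Suppose there exists a finite set S of axis-parallel segments contained in the free space F_ε(P,Q) such that proj_x(⋃S) = [0,1] and proj_y(⋃S) = [0,1], and the x-projections (respectively y-projections) of all segments of S have pairwise disjoint relative interiors. Then, letting the endpoints of the x-projections of the segments define a subdivision 0 = a₀ < … < a_p = 1 and the endpoints of the y-projections define 0 = b₀ < … < b_q = 1, the k-station condition holds with k ≤ 2|S|: every subinterval [a_{i−1},a_i] of P is within distance ε of some single point Q(b_j), and every subinterval [b_{j−1},b_j] of Q is within distance ε of some single point P(a_i). -/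
open Set

lemma icc_subdivision {ι : Type*} (S : Finset ι) (u v : ι → ℝ)
    (hnorm : ∀ s ∈ S, ¬ u s ≤ v s → u s = 1 ∧ v s = 0)
    (hcov : (⋃ s ∈ S, Set.Icc (u s) (v s)) = Set.Icc (0:ℝ) 1)
    (hdisj : ∀ s ∈ S, ∀ t ∈ S, s ≠ t →
      interior (Set.Icc (u s) (v s)) ∩ interior (Set.Icc (u t) (v t)) = ∅) :
    ∃ (p : ℕ) (a : Fin (p + 1) → ℝ), 0 < p ∧ p ≤ S.card ∧ StrictMono a ∧
      a 0 = 0 ∧ a (Fin.last p) = 1 ∧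
      (∀ i : Fin p, ∃ s ∈ S, Set.Icc (a i.castSucc) (a i.succ) ⊆ Set.Icc (u s) (v s)) ∧
      (∀ x : ℝ, (∃ s ∈ S, u s = x ∨ v s = x) → ∃ j, a j = x) := by
  classical
  have hsub : ∀ s ∈ S, Set.Icc (u s) (v s) ⊆ Set.Icc (0:ℝ) 1 := by
    intro s hs
    rw [← hcov]
    exact Set.subset_biUnion_of_mem (u := fun s => Set.Icc (u s) (v s)) hs
  set A : Finset ℝ := insert 0 (insert 1 (S.image u ∪ S.image v)) with hA
  have memA : ∀ x : ℝ, x ∈ A ↔ x = 0 ∨ x = 1 ∨ ∃ s ∈ S, u s = x ∨ v s = x := by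
    intro x
    simp only [hA, Finset.mem_insert, Finset.mem_union, Finset.mem_image]
    constructor
    · rintro (h | h | ⟨s, hs, h⟩ | ⟨s, hs, h⟩)
      · exact Or.inl h
      · exact Or.inr (Or.inl h)
      · exact Or.inr (Or.inr ⟨s, hs, Or.inl h⟩)
      · exact Or.inr (Or.inr ⟨s, hs, Or.inr h⟩)
    · rintro (h | h | ⟨s, hs, h | h⟩)
      · exact Or.inl h
      · exact Or.inr (Or.inl h)
      · exact Or.inr (Or.inr (Or.inl ⟨s, hs, h⟩))
      · exact Or.inr (Or.inr (Or.inr ⟨s, hs, h⟩))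
  have hA01 : ∀ x ∈ A, 0 ≤ x ∧ x ≤ 1 := by
    intro x hx
    rcases (memA x).1 hx with h | h | ⟨s, hs, h⟩
    · simp [h]
    · simp [h]
    · by_cases huv : u s ≤ v s
      · have h1 := hsub s hs ⟨le_refl (u s), huv⟩
        have h2 := hsub s hs ⟨huv, le_refl (v s)⟩
        rcases h with rfl | rfl
        · exact ⟨h1.1, h1.2⟩
        · exact ⟨h2.1, h2.2⟩
      · obtain ⟨h1, h2⟩ := hnorm s hs huv
        rcases h with rfl | rfl <;> simp [h1, h2]
  have h0A : (0:ℝ) ∈ A := by simp [hA]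
  have h1A : (1:ℝ) ∈ A := by simp [hA]
  have hcard : 2 ≤ A.card := Finset.one_lt_card.2 ⟨0, h0A, 1, h1A, by norm_num⟩
  obtain ⟨p, hp⟩ : ∃ p : ℕ, A.card = p + 1 := ⟨A.card - 1, by omega⟩
  have hp1 : 0 < p := by omega
  set a : Fin (p + 1) → ℝ := fun i => A.orderEmbOfFin hp i with ha
  have haMono : StrictMono a := (A.orderEmbOfFin hp).strictMono
  have haMem : ∀ i, a i ∈ A := fun i => A.orderEmbOfFin_mem hp i
  have haSurj : ∀ x ∈ A, ∃ j, a j = x := by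
    intro x hx
    have : x ∈ Set.range (A.orderEmbOfFin hp) := by
      rw [A.range_orderEmbOfFin hp]; exact_mod_cast hx
    exact this
  have ha0 : a 0 = 0 := by
    obtain ⟨j, hj⟩ := haSurj 0 h0A
    have h1 : a 0 ≤ a j := haMono.monotone (Fin.zero_le j)
    have h2 := (hA01 _ (haMem 0)).1
    rw [hj] at h1
    linarith
  have halast : a (Fin.last p) = 1 := by
    obtain ⟨j, hj⟩ := haSurj 1 h1A
    have h1 : a j ≤ a (Fin.last p) := haMono.monotone (Fin.le_last j)
    have h2 := (hA01 _ (haMem (Fin.last p))).2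
    rw [hj] at h1
    linarith
  -- no breakpoint strictly inside a gap
  have hnb : ∀ i : Fin p, ∀ x ∈ A, x ∉ Set.Ioo (a i.castSucc) (a i.succ) := by
    rintro i x hx ⟨hx1, hx2⟩
    obtain ⟨j, rfl⟩ := haSurj x hx
    have h1 : i.castSucc < j := haMono.lt_iff_lt.1 hx1
    have h2 : i.succ ≤ j := by
      rwa [Fin.castSucc_lt_iff_succ_le] at h1
    exact absurd hx2 (not_lt.2 (haMono.monotone h2))
  -- key: each gap is inside some interval
  have key : ∀ i : Fin p, ∃ s ∈ S, u s ≤ a i.castSucc ∧ a i.succ ≤ v s := by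
    intro i
    have hlt : a i.castSucc < a i.succ := haMono Fin.castSucc_lt_succ
    obtain ⟨x, hxIoo, hxA⟩ := (Set.Ioo_infinite hlt).exists_notMem_finset A
    have hx01 : x ∈ Set.Icc (0:ℝ) 1 :=
      ⟨le_trans (hA01 _ (haMem i.castSucc)).1 (le_of_lt hxIoo.1),
       le_trans (le_of_lt hxIoo.2) (hA01 _ (haMem i.succ)).2⟩
    rw [← hcov] at hx01
    simp only [Set.mem_iUnion] at hx01
    obtain ⟨s, hs, hxs⟩ := hx01
    have hus : u s < x := lt_of_le_of_ne hxs.1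
      (fun h => hxA ((memA _).2 (Or.inr (Or.inr ⟨s, hs, Or.inl h⟩))))
    have hvs : x < v s := lt_of_le_of_ne hxs.2
      (fun h => hxA ((memA _).2 (Or.inr (Or.inr ⟨s, hs, Or.inr h.symm⟩))))
    refine ⟨s, hs, ?_, ?_⟩
    · by_contra h
      push_neg at h
      exact hnb i (u s) ((memA _).2 (Or.inr (Or.inr ⟨s, hs, Or.inl rfl⟩)))
        ⟨h, lt_trans hus hxIoo.2⟩
    · by_contra h
      push_neg at h
      exact hnb i (v s) ((memA _).2 (Or.inr (Or.inr ⟨s, hs, Or.inr rfl⟩)))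
        ⟨lt_trans hxIoo.1 hvs, h⟩
  -- positivity of gaps' right endpoints
  have hpos : ∀ i : Fin p, 0 < a i.succ := by
    intro i
    calc (0:ℝ) = a 0 := ha0.symm
    _ ≤ a i.castSucc := haMono.monotone (Fin.zero_le _)
    _ < a i.succ := haMono Fin.castSucc_lt_succ
  -- key2 : injective assignment of segments to gaps
  have key2 : ∀ i : Fin p, ∃ s ∈ S,
      v s = a i.succ ∨ (¬ u s < v s ∧ u s = a i.succ) := by
    intro i
    obtain ⟨s, hs, hus, hvs⟩ := key i
    by_cases hveq : v s = a i.succ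
    · exact ⟨s, hs, Or.inl hveq⟩
    have hlt : a i.castSucc < a i.succ := haMono Fin.castSucc_lt_succ
    have hvgt : a i.succ < v s := lt_of_le_of_ne hvs (fun h => hveq h.symm)
    have hmem : a i.succ ∈ A := haMem i.succ
    rcases (memA _).1 hmem with h | h | ⟨t, ht, hend⟩
    · exact absurd h (ne_of_gt (hpos i))
    · exfalso
      have : v s ≤ 1 := (hA01 _ ((memA _).2 (Or.inr (Or.inr ⟨s, hs, Or.inr rfl⟩)))).2
      rw [h] at hvgt
      linarith
    · by_cases htlt : u t < v t
      · exfalso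
        have hts : t ≠ s := by
          rintro rfl
          rcases hend with h | h
          · rw [h] at hus; linarith
          · exact hveq h
        have hdj := hdisj t ht s hs hts
        rw [interior_Icc, interior_Icc] at hdj
        rcases hend with h | h
        · -- u t = a i.succ
          set x := (a i.succ + min (v t) (v s)) / 2 with hx
          have h1 : a i.succ < v t := h ▸ htlt
          have hm : a i.succ < min (v t) (v s) := lt_min h1 hvgt
          have hx1 : a i.succ < x := by rw [hx]; linarith
          have hx2 : x < min (v t) (v s) := by rw [hx]; linarith
          have : x ∈ Set.Ioo (u t) (v t) ∩ Set.Ioo (u s) (v s) :=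
            ⟨⟨h ▸ hx1, lt_of_lt_of_le hx2 (min_le_left _ _)⟩,
             ⟨by linarith, lt_of_lt_of_le hx2 (min_le_right _ _)⟩⟩
          rw [hdj] at this
          exact this
        · -- v t = a i.succ
          set x := (max (u t) (a i.castSucc) + a i.succ) / 2 with hx
          have h1 : u t < a i.succ := h ▸ htlt
          have hm : max (u t) (a i.castSucc) < a i.succ := max_lt h1 hlt
          have hx1 : max (u t) (a i.castSucc) < x := by rw [hx]; linarith
          have hx2 : x < a i.succ := by rw [hx]; linarith
          have : x ∈ Set.Ioo (u t) (v t) ∩ Set.Ioo (u s) (v s) :=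
            ⟨⟨lt_of_le_of_lt (le_max_left _ _) hx1, h ▸ hx2⟩,
             ⟨lt_of_le_of_lt hus (lt_of_le_of_lt (le_max_right _ _) hx1), by linarith⟩⟩
          rw [hdj] at this
          exact this
      · rcases hend with h | h
        · exact ⟨t, ht, Or.inr ⟨htlt, h⟩⟩
        · exact ⟨t, ht, Or.inl h⟩
  choose f hfS hf using key2
  have hcardp : p ≤ S.card := by
    have : (Finset.univ : Finset (Fin p)).card ≤ S.card := by
      apply Finset.card_le_card_of_injOn f (fun i _ => hfS i)
      intro i _ j _ hij
      have hsucc : a i.succ = a j.succ := by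
        rcases hf i with hi | ⟨hni, hi⟩ <;> rcases hf j with hj | ⟨hnj, hj⟩
        · rw [← hi, ← hj, hij]
        · -- v (f i) = a i.succ, ¬u<v at f j, u (f j) = a j.succ, f i = f j
          rw [← hij] at hnj hj
          rcases lt_or_eq_of_le (not_lt.1 hnj) with hvu | hvu
          · exfalso
            obtain ⟨h1, h2⟩ := hnorm (f i) (hfS i) (not_le.2 hvu)
            rw [h2] at hi
            exact absurd hi.symm (ne_of_gt (hpos i))
          · rw [← hi, ← hj]
            exact hvu
        · rw [hij] at hni hi
          rcases lt_or_eq_of_le (not_lt.1 hni) with hvu | hvu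
          · exfalso
            obtain ⟨h1, h2⟩ := hnorm (f j) (hfS j) (not_le.2 hvu)
            rw [h2] at hj
            exact absurd hj.symm (ne_of_gt (hpos j))
          · rw [← hi, ← hj]
            exact hvu.symm
        · rw [← hi, ← hj, hij]
      have := haMono.injective hsucc
      exact Fin.succ_injective _ this
    simpa using this
  refine ⟨p, a, hp1, hcardp, haMono, ha0, halast, ?_, ?_⟩
  · intro i
    obtain ⟨s, hs, h1, h2⟩ := key i
    exact ⟨s, hs, Set.Icc_subset_Icc h1 h2⟩
  · intro x hx
    exact haSurj x ((memA x).2 (Or.inr (Or.inr hx)))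

/-- A horizontal segment in the plane: `[x₁,x₂] × {y}`. -/
def IsHorizSeg (s : Set (ℝ × ℝ)) : Prop :=
  ∃ x₁ x₂ y : ℝ, s = Set.Icc x₁ x₂ ×ˢ ({y} : Set ℝ)

/-- A vertical segment in the plane: `{x} × [y₁,y₂]`. -/
def IsVertSeg (s : Set (ℝ × ℝ)) : Prop :=
  ∃ x y₁ y₂ : ℝ, s = ({x} : Set ℝ) ×ˢ Set.Icc y₁ y₂

/-- A finite set `S` of axis-parallel segments in the free space `F_ε(P,Q)`,
whose `x`- and `y`-projections cover `[0,1]` and have pairwise disjoint relative interiors,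
yields a `k`-station certificate at distance `ε` with `k = p + q ≤ 2|S|`. -/
theorem stmt_9 (P Q : ℝ → EuclideanSpace ℝ (Fin 2))
    (hP : ContinuousOn P (Set.Icc 0 1)) (hQ : ContinuousOn Q (Set.Icc 0 1))
    (ε : ℝ) (hε : 0 ≤ ε) (S : Finset (Set (ℝ × ℝ)))
    (hseg : ∀ s ∈ S, IsHorizSeg s ∨ IsVertSeg s)
    (hfree : ∀ s ∈ S, s ⊆ {st : ℝ × ℝ | st.1 ∈ Set.Icc (0:ℝ) 1 ∧ st.2 ∈ Set.Icc (0:ℝ) 1 ∧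
      dist (P st.1) (Q st.2) ≤ ε})
    (hpx : Prod.fst '' ⋃₀ (S : Set (Set (ℝ × ℝ))) = Set.Icc (0:ℝ) 1)
    (hpy : Prod.snd '' ⋃₀ (S : Set (Set (ℝ × ℝ))) = Set.Icc (0:ℝ) 1)
    (hdx : ∀ s ∈ S, ∀ t ∈ S, s ≠ t →
      interior (Prod.fst '' s) ∩ interior (Prod.fst '' t) = ∅)
    (hdy : ∀ s ∈ S, ∀ t ∈ S, s ≠ t →
      interior (Prod.snd '' s) ∩ interior (Prod.snd '' t) = ∅) :
    ∃ (p q : ℕ) (a : Fin (p + 1) → ℝ) (b : Fin (q + 1) → ℝ),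
      0 < p ∧ 0 < q ∧ p + q ≤ 2 * S.card ∧
      StrictMono a ∧ StrictMono b ∧
      a 0 = 0 ∧ a (Fin.last p) = 1 ∧ b 0 = 0 ∧ b (Fin.last q) = 1 ∧
      (∀ i : Fin p, ∃ j : Fin (q + 1),
        ∀ s ∈ Set.Icc (a i.castSucc) (a i.succ), dist (P s) (Q (b j)) ≤ ε) ∧
      (∀ j : Fin q, ∃ i : Fin (p + 1),
        ∀ t ∈ Set.Icc (b j.castSucc) (b j.succ), dist (P (a i)) (Q t) ≤ ε) := by
  classical
  -- normalized endpoints for the x-projections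
  have hX : ∀ s : Set (ℝ × ℝ), ∃ uv : ℝ × ℝ,
      s ∈ S → (Prod.fst '' s = Set.Icc uv.1 uv.2 ∧ (¬ uv.1 ≤ uv.2 → uv.1 = 1 ∧ uv.2 = 0)) := by
    intro s
    by_cases hs : s ∈ S
    · rcases hseg s hs with ⟨x₁, x₂, y, rfl⟩ | ⟨x, y₁, y₂, rfl⟩
      · by_cases hx : x₁ ≤ x₂
        · exact ⟨(x₁, x₂), fun _ =>
            ⟨Set.fst_image_prod _ (Set.singleton_nonempty y), fun h => absurd hx h⟩⟩
        · refine ⟨(1, 0), fun _ => ⟨?_, fun _ => ⟨rfl, rfl⟩⟩⟩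
          rw [Set.fst_image_prod _ (Set.singleton_nonempty y), Set.Icc_eq_empty hx,
            Set.Icc_eq_empty (by norm_num)]
      · by_cases hy : y₁ ≤ y₂
        · refine ⟨(x, x), fun _ => ⟨?_, fun h => absurd le_rfl h⟩⟩
          rw [show ((x,x) : ℝ × ℝ).1 = x from rfl, show ((x,x) : ℝ × ℝ).2 = x from rfl,
            Set.Icc_self, Set.fst_image_prod _ (Set.nonempty_Icc.2 hy)]
        · refine ⟨(1, 0), fun _ => ⟨?_, fun _ => ⟨rfl, rfl⟩⟩⟩
          rw [Set.Icc_eq_empty hy, Set.prod_empty, Set.image_empty,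
            Set.Icc_eq_empty (by norm_num)]
    · exact ⟨(1, 0), fun h => absurd h hs⟩
  -- normalized endpoints for the y-projections
  have hY : ∀ s : Set (ℝ × ℝ), ∃ uv : ℝ × ℝ,
      s ∈ S → (Prod.snd '' s = Set.Icc uv.1 uv.2 ∧ (¬ uv.1 ≤ uv.2 → uv.1 = 1 ∧ uv.2 = 0)) := by
    intro s
    by_cases hs : s ∈ S
    · rcases hseg s hs with ⟨x₁, x₂, y, rfl⟩ | ⟨x, y₁, y₂, rfl⟩
      · by_cases hx : x₁ ≤ x₂
        · refine ⟨(y, y), fun _ => ⟨?_, fun h => absurd le_rfl h⟩⟩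
          rw [show ((y,y) : ℝ × ℝ).1 = y from rfl, show ((y,y) : ℝ × ℝ).2 = y from rfl,
            Set.Icc_self, Set.snd_image_prod (Set.nonempty_Icc.2 hx)]
        · refine ⟨(1, 0), fun _ => ⟨?_, fun _ => ⟨rfl, rfl⟩⟩⟩
          rw [Set.Icc_eq_empty hx, Set.empty_prod, Set.image_empty,
            Set.Icc_eq_empty (by norm_num)]
      · by_cases hy : y₁ ≤ y₂
        · exact ⟨(y₁, y₂), fun _ =>
            ⟨Set.snd_image_prod (Set.singleton_nonempty x) _, fun h => absurd hy h⟩⟩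
        · refine ⟨(1, 0), fun _ => ⟨?_, fun _ => ⟨rfl, rfl⟩⟩⟩
          rw [Set.snd_image_prod (Set.singleton_nonempty x), Set.Icc_eq_empty hy,
            Set.Icc_eq_empty (by norm_num)]
    · exact ⟨(1, 0), fun h => absurd h hs⟩
  choose uvX huvX using hX
  choose uvY huvY using hY
  set uX : Set (ℝ × ℝ) → ℝ := fun s => (uvX s).1 with huX
  set vX : Set (ℝ × ℝ) → ℝ := fun s => (uvX s).2 with hvX
  set uY : Set (ℝ × ℝ) → ℝ := fun s => (uvY s).1 with huY
  set vY : Set (ℝ × ℝ) → ℝ := fun s => (uvY s).2 with hvY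
  have hXeq : ∀ s ∈ S, Prod.fst '' s = Set.Icc (uX s) (vX s) := fun s hs => (huvX s hs).1
  have hYeq : ∀ s ∈ S, Prod.snd '' s = Set.Icc (uY s) (vY s) := fun s hs => (huvY s hs).1
  have covX : (⋃ s ∈ S, Set.Icc (uX s) (vX s)) = Set.Icc (0:ℝ) 1 := by
    rw [← hpx, Set.image_sUnion, Set.sUnion_image]
    exact (Set.iUnion₂_congr (fun s hs => (hXeq s hs).symm))
  have covY : (⋃ s ∈ S, Set.Icc (uY s) (vY s)) = Set.Icc (0:ℝ) 1 := by
    rw [← hpy, Set.image_sUnion, Set.sUnion_image]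
    exact (Set.iUnion₂_congr (fun s hs => (hYeq s hs).symm))
  have disjX : ∀ s ∈ S, ∀ t ∈ S, s ≠ t →
      interior (Set.Icc (uX s) (vX s)) ∩ interior (Set.Icc (uX t) (vX t)) = ∅ := by
    intro s hs t ht hne
    have := hdx s hs t ht hne
    rwa [hXeq s hs, hXeq t ht] at this
  have disjY : ∀ s ∈ S, ∀ t ∈ S, s ≠ t →
      interior (Set.Icc (uY s) (vY s)) ∩ interior (Set.Icc (uY t) (vY t)) = ∅ := by
    intro s hs t ht hne
    have := hdy s hs t ht hne
    rwa [hYeq s hs, hYeq t ht] at this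
  obtain ⟨p, a, hp0, hpc, haM, ha0, haL, hG1X, hSurjX⟩ :=
    icc_subdivision S uX vX (fun s hs => (huvX s hs).2) covX disjX
  obtain ⟨q, b, hq0, hqc, hbM, hb0, hbL, hG1Y, hSurjY⟩ :=
    icc_subdivision S uY vY (fun s hs => (huvY s hs).2) covY disjY
  refine ⟨p, q, a, b, hp0, hq0, by omega, haM, hbM, ha0, haL, hb0, hbL, ?_, ?_⟩
  · intro i
    obtain ⟨s, hsS, hsub⟩ := hG1X i
    have hlt : a i.castSucc < a i.succ := haM Fin.castSucc_lt_succ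
    have hm1 : a i.castSucc ∈ Prod.fst '' s := by
      rw [hXeq s hsS]; exact hsub ⟨le_refl _, le_of_lt hlt⟩
    have hm2 : a i.succ ∈ Prod.fst '' s := by
      rw [hXeq s hsS]; exact hsub ⟨le_of_lt hlt, le_refl _⟩
    rcases hseg s hsS with ⟨x₁, x₂, y, rfl⟩ | ⟨x, y₁, y₂, rfl⟩
    · -- horizontal
      have hfst : Prod.fst '' (Set.Icc x₁ x₂ ×ˢ ({y} : Set ℝ)) = Set.Icc x₁ x₂ :=
        Set.fst_image_prod _ (Set.singleton_nonempty y)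
      rw [hfst] at hm1
      have hx12 : x₁ ≤ x₂ := le_trans hm1.1 hm1.2
      have hsnd : Prod.snd '' (Set.Icc x₁ x₂ ×ˢ ({y} : Set ℝ)) = {y} :=
        Set.snd_image_prod (Set.nonempty_Icc.2 hx12) _
      have hyeq : uY (Set.Icc x₁ x₂ ×ˢ ({y} : Set ℝ)) = y := by
      




        have h := hYeq _ hsS
        rw [hsnd] at h
        exact (Set.Icc_eq_singleton_iff.1 h.symm).1
      obtain ⟨j, hj⟩ := hSurjY y ⟨_, hsS, Or.inl hyeq⟩
      refine ⟨j, fun z hz => ?_⟩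
      have hzx : z ∈ Set.Icc x₁ x₂ := by
        have h := hsub hz
        rwa [← hXeq _ hsS, hfst] at h
      have hmem : (z, y) ∈ Set.Icc x₁ x₂ ×ˢ ({y} : Set ℝ) := ⟨hzx, rfl⟩
      have h := hfree _ hsS hmem
      rw [hj]
      exact h.2.2
    · -- vertical : impossible
      exfalso
      have hsubx : Prod.fst '' (({x} : Set ℝ) ×ˢ Set.Icc y₁ y₂) ⊆ {x} := by
        rintro z ⟨w, hw, rfl⟩
        exact hw.1
      have e1 := hsubx hm1
      have e2 := hsubx hm2
      simp only [Set.mem_singleton_iff] at e1 e2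
      rw [e1, e2] at hlt
      exact lt_irrefl _ hlt
  · intro j
    obtain ⟨s, hsS, hsub⟩ := hG1Y j
    have hlt : b j.castSucc < b j.succ := hbM Fin.castSucc_lt_succ
    have hm1 : b j.castSucc ∈ Prod.snd '' s := by
      rw [hYeq s hsS]; exact hsub ⟨le_refl _, le_of_lt hlt⟩
    have hm2 : b j.succ ∈ Prod.snd '' s := by
      rw [hYeq s hsS]; exact hsub ⟨le_of_lt hlt, le_refl _⟩
    rcases hseg s hsS with ⟨x₁, x₂, y, rfl⟩ | ⟨x, y₁, y₂, rfl⟩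
    · -- horizontal : impossible
      exfalso
      have hsuby : Prod.snd '' (Set.Icc x₁ x₂ ×ˢ ({y} : Set ℝ)) ⊆ {y} := by
        rintro z ⟨w, hw, rfl⟩
        exact hw.2
      have e1 := hsuby hm1
      have e2 := hsuby hm2
      simp only [Set.mem_singleton_iff] at e1 e2
      rw [e1, e2] at hlt
      exact lt_irrefl _ hlt
    · -- vertical
      have hsnd : Prod.snd '' (({x} : Set ℝ) ×ˢ Set.Icc y₁ y₂) = Set.Icc y₁ y₂ :=
        Set.snd_image_prod (Set.singleton_nonempty x) _
      rw [hsnd] at hm1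
      have hy12 : y₁ ≤ y₂ := le_trans hm1.1 hm1.2
      have hfst : Prod.fst '' (({x} : Set ℝ) ×ˢ Set.Icc y₁ y₂) = {x} :=
        Set.fst_image_prod _ (Set.nonempty_Icc.2 hy12)
      have hxeq : uX (({x} : Set ℝ) ×ˢ Set.Icc y₁ y₂) = x := by
        have h := hXeq _ hsS
        rw [hfst] at h
        exact (Set.Icc_eq_singleton_iff.1 h.symm).1
      obtain ⟨i, hi⟩ := hSurjX x ⟨_, hsS, Or.inl hxeq⟩
      refine ⟨i, fun z hz => ?_⟩
      have hzy : z ∈ Set.Icc y₁ y₂ := by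
        have h := hsub hz
        rwa [← hYeq _ hsS, hsnd] at h
      have hmem : (x, z) ∈ ({x} : Set ℝ) ×ˢ Set.Icc y₁ y₂ := ⟨rfl, hzy⟩
      have h := hfree _ hsS hmem
      rw [hi]
      exact h.2.2
end

section
/- Let P, Q : [0,1] → ℝ² and k ∈ ℕ. Then d_cut(k, P, Q) ≤ d_station(k, P, Q), where d_cut(k,P,Q) is the k-Fréchet (cut) distance and d_station(k,P,Q) is the k-station distance. -/
open Set
open scoped ENNReal

/-- A `k`-cut (k-Fréchet) certificate at distance `ε`: both curves are subdivided into `k`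
(possibly degenerate) subcurves, matched by a permutation so that matched pieces have Fréchet
distance at most `ε` (witnessed by monotone continuous reparameterizations). -/
def CertCut (k : ℕ) (P Q : ℝ → EuclideanSpace ℝ (Fin 2)) (ε : ℝ) : Prop :=
  ∃ (u v : Fin (k + 1) → ℝ), Monotone u ∧ Monotone v ∧
    u 0 = 0 ∧ u (Fin.last k) = 1 ∧ v 0 = 0 ∧ v (Fin.last k) = 1 ∧
    ∃ π : Equiv.Perm (Fin k), ∀ i : Fin k, ∃ σ τ : ℝ → ℝ,
      ContinuousOn σ (Icc 0 1) ∧ ContinuousOn τ (Icc 0 1) ∧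
      MonotoneOn σ (Icc 0 1) ∧ MonotoneOn τ (Icc 0 1) ∧
      σ '' Icc 0 1 = Icc (u i.castSucc) (u i.succ) ∧
      τ '' Icc 0 1 = Icc (v (π i).castSucc) (v (π i).succ) ∧
      ∀ t ∈ Icc (0:ℝ) 1, dist (P (σ t)) (Q (τ t)) ≤ ε

/-- A `k`-station certificate at distance `ε`: subdivisions of `P` and `Q` into `p` and `q`
pieces with `p + q = k` such that each piece of `P` lies within `ε` of some station `Q(b j)`
and each piece of `Q` lies within `ε` of some station `P(a i)`. -/
def CertStation (k : ℕ) (P Q : ℝ → EuclideanSpace ℝ (Fin 2)) (ε : ℝ) : Prop :=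
  ∃ p q : ℕ, 0 < p ∧ 0 < q ∧ p + q = k ∧
    ∃ (a : Fin (p + 1) → ℝ) (b : Fin (q + 1) → ℝ),
      StrictMono a ∧ StrictMono b ∧
      a 0 = 0 ∧ a (Fin.last p) = 1 ∧ b 0 = 0 ∧ b (Fin.last q) = 1 ∧
      (∀ i : Fin p, ∃ j : Fin q,
        ∀ s ∈ Icc (a i.castSucc) (a i.succ), dist (P s) (Q (b j.succ)) ≤ ε) ∧
      (∀ j : Fin q, ∃ i : Fin p,
        ∀ t ∈ Icc (b j.castSucc) (b j.succ), dist (P (a i.succ)) (Q t) ≤ ε)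

/-- The `k`-Fréchet (cut) distance, as an infimum in `ℝ≥0∞`. -/
noncomputable def dcut (k : ℕ) (P Q : ℝ → EuclideanSpace ℝ (Fin 2)) : ℝ≥0∞ :=
  ⨅ (ε : ℝ) (_ : 0 < ε ∧ CertCut k P Q ε), ENNReal.ofReal ε

/-- The `k`-station distance, as an infimum in `ℝ≥0∞`. -/
noncomputable def dstation (k : ℕ) (P Q : ℝ → EuclideanSpace ℝ (Fin 2)) : ℝ≥0∞ :=
  ⨅ (ε : ℝ) (_ : 0 < ε ∧ CertStation k P Q ε), ENNReal.ofReal ε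


open Set

namespace Stmt10Aux

/-- Left endpoint of a piece: proper piece `s` of the curve, or degenerate station piece. -/
def pcL {n m : ℕ} (a : Fin (n+1) → ℝ) (c : Fin m → Fin n) : Fin n ⊕ Fin m → ℝ :=
  Sum.elim (fun s => a s.castSucc) (fun j => a (c j).succ)

/-- Right endpoint of a piece. -/
def pcR {n m : ℕ} (a : Fin (n+1) → ℝ) (c : Fin m → Fin n) : Fin n ⊕ Fin m → ℝ :=
  Sum.elim (fun s => a s.succ) (fun j => a (c j).succ)

lemma side (n m : ℕ) (hn : 0 < n) (a : Fin (n+1) → ℝ) (ha : StrictMono a)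
    (c : Fin m → Fin n) :
    ∃ (u : Fin (n+m+1) → ℝ) (w : Fin (n+m) ≃ (Fin n ⊕ Fin m)),
      Monotone u ∧ u 0 = a 0 ∧ u (Fin.last (n+m)) = a (Fin.last n) ∧
      ∀ i : Fin (n+m),
        u i.castSucc = pcL a c (w i) ∧ u i.succ = pcR a c (w i) := by
  classical
  set L := pcL a c with hLdef
  set R := pcR a c with hRdef
  have hLa : ∀ x, ∃ t : Fin (n+1), L x = a t := by
    rintro (s | j)
    · exact ⟨s.castSucc, rfl⟩
    · exact ⟨(c j).succ, rfl⟩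
  have hLR : ∀ x, L x ≤ R x := by
    rintro (s | j)
    · exact (ha ((Fin.castSucc_lt_succ : s.castSucc < s.succ))).le
    · exact le_rfl
  have hLle : ∀ x, L x ≤ a (Fin.last n) := by
    intro x; obtain ⟨t, ht⟩ := hLa x; rw [ht]; exact ha.monotone (Fin.le_last t)
  have hRa : ∀ x, ∃ t : Fin (n+1), R x = a t := by
    rintro (s | j)
    · exact ⟨s.succ, rfl⟩
    · exact ⟨(c j).succ, rfl⟩
  have hRle : ∀ x, R x ≤ a (Fin.last n) := by
    intro x; obtain ⟨t, ht⟩ := hRa x; rw [ht]; exact ha.monotone (Fin.le_last t)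
  set ρ : Fin (n+m) → ℝ ×ₗ ℝ :=
    fun i => toLex (L (finSumFinEquiv.symm i), R (finSumFinEquiv.symm i)) with hρ
  set w : Fin (n+m) ≃ (Fin n ⊕ Fin m) :=
    (Tuple.sort ρ).trans finSumFinEquiv.symm with hw
  have surj : ∀ x, ∃ i, w i = x := fun x => ⟨w.symm x, w.apply_symm_apply x⟩
  have key : ∀ i j : Fin (n+m), i ≤ j →
      L (w i) < L (w j) ∨ (L (w i) = L (w j) ∧ R (w i) ≤ R (w j)) := by
    intro i j hij
    have h := Tuple.monotone_sort ρ hij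
    have h' : toLex (L (w i), R (w i)) ≤ toLex (L (w j), R (w j)) := h
    rw [Prod.Lex.le_iff] at h'
    exact h'
  have keyL : ∀ i j : Fin (n+m), i ≤ j → L (w i) ≤ L (w j) := by
    intro i j hij
    rcases key i j hij with h | ⟨h, _⟩
    · exact h.le
    · exact h.le
  -- chaining
  have chain : ∀ i j : Fin (n+m), (i : ℕ) + 1 = (j : ℕ) → R (w i) = L (w j) := by
    intro i j hij
    have hij' : i ≤ j := by rw [Fin.le_def]; omega
    rcases hx : w i with s | jj
    · -- proper piece [a s.castSucc, a s.succ]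
      have hLx : L (w i) = a s.castSucc := by rw [hx]; rfl
      have hRx : R (w i) = a s.succ := by rw [hx]; rfl
      show a s.succ = L (w j)
      rcases key i j hij' with hlt | ⟨heq, hR⟩
      · obtain ⟨t, ht⟩ := hLa (w j)
        rw [ht]
        rw [hLx, ht] at hlt
        have hst : s.castSucc < t := ha.lt_iff_lt.mp hlt
        have hst' : (s : ℕ) + 1 ≤ (t : ℕ) := by
          rw [Fin.lt_def] at hst; simpa using hst
        by_contra hne
        have hlt2 : (s : ℕ) + 1 < (t : ℕ) := by
          rcases lt_or_eq_of_le hst' with h | h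
          · exact h
          · exact absurd (congrArg a (Fin.ext h : s.succ = t)) hne
        have hs' : (s : ℕ) + 1 < n := by
          have := t.isLt; omega
        set s' : Fin n := ⟨(s : ℕ) + 1, hs'⟩ with hs'def
        have hcs : s'.castSucc = s.succ := by ext; simp [hs'def]
        obtain ⟨i₀, hi₀⟩ := surj (Sum.inl s')
        have hLs' : L (w i₀) = a s.succ := by rw [hi₀]; show a s'.castSucc = _; rw [hcs]
        rcases le_or_gt i₀ i with h₀ | h₀
        · have h1 := keyL i₀ i h₀
          rw [hLs', hLx] at h1
          exact absurd h1 (not_le.mpr (ha ((Fin.castSucc_lt_succ : s.castSucc < s.succ))))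
        · have h₀' : j ≤ i₀ := by
            rw [Fin.lt_def] at h₀; rw [Fin.le_def]; omega
          have h1 := keyL j i₀ h₀'
          rw [hLs', ht] at h1
          have h2 := ha.le_iff_le.mp h1
          rw [Fin.le_def] at h2; simp at h2; omega
      · exfalso
        rcases hy : w j with s2 | j2
        · have heq' : a s.castSucc = a s2.castSucc := by
            rw [hLx, hy] at heq; exact heq
          have hs : s = s2 := Fin.castSucc_injective _ (ha.injective heq')
          have : i = j := w.injective (by rw [hx, hy, hs])
          omega
        · have hLy : L (w j) = a (c j2).succ := by rw [hy]; rfl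
          have hRy : R (w j) = a (c j2).succ := by rw [hy]; rfl
          rw [hRx, hRy] at hR
          rw [hLx, hLy] at heq
          have : a s.succ ≤ a s.castSucc := hR.trans_eq heq.symm
          exact absurd this (not_le.mpr (ha ((Fin.castSucc_lt_succ : s.castSucc < s.succ))))
    · -- degenerate piece at a (c jj).succ
      have hLx : L (w i) = a (c jj).succ := by rw [hx]; rfl
      have hRx : R (w i) = a (c jj).succ := by rw [hx]; rfl
      show a (c jj).succ = L (w j)
      rcases key i j hij' with hlt | ⟨heq, _⟩
      · exfalso
        rw [hLx] at hlt
        have ht : ((c jj).succ : ℕ) < n := by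
          by_contra hc
          have htl : (c jj).succ = Fin.last n := by
            ext
            have h2 := ((c jj).succ).isLt
            simp only [Fin.val_last]
            omega
          have h1 := hLle (w j)
          rw [htl] at hlt; linarith
        set s : Fin n := ⟨((c jj).succ : ℕ), ht⟩ with hsdef
        have hcs : s.castSucc = (c jj).succ := by ext; simp [hsdef]
        obtain ⟨i₀, hi₀⟩ := surj (Sum.inl s)
        have hi₀i : i₀ ≠ i := by
          intro h; rw [h, hx] at hi₀; cases hi₀
        rcases le_or_gt i₀ i with h₀ | h₀
        · rcases key i₀ i h₀ with h1 | ⟨h1, h2⟩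
          · have hLi₀ : L (w i₀) = a (c jj).succ := by
              rw [hi₀]; show a s.castSucc = _; rw [hcs]
            rw [hLi₀, hLx] at h1; exact lt_irrefl _ h1
          · have hRi₀ : R (w i₀) = a s.succ := by rw [hi₀]; rfl
            rw [hRi₀, hRx] at h2
            have h3 := ha.le_iff_le.mp h2
            rw [← hcs] at h3
            exact absurd h3 (not_le.mpr ((Fin.castSucc_lt_succ : s.castSucc < s.succ)))
        · have h₀' : j ≤ i₀ := by
            rw [Fin.lt_def] at h₀; rw [Fin.le_def]; omega
          have h1 := keyL j i₀ h₀'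
          have hLi₀ : L (w i₀) = a (c jj).succ := by
            rw [hi₀]; show a s.castSucc = _; rw [hcs]
          rw [hLi₀] at h1
          linarith
      · rw [hLx] at heq; exact heq
  have hnm : 0 < n + m := by omega
  -- first piece starts at a 0
  have hB : L (w ⟨0, hnm⟩) = a 0 := by
    set s₀ : Fin n := ⟨0, hn⟩ with hs₀
    obtain ⟨i₀, hi₀⟩ := surj (Sum.inl s₀)
    have h1 := keyL ⟨0, hnm⟩ i₀ (by rw [Fin.le_def]; exact Nat.zero_le _)
    have hz : (s₀.castSucc : Fin (n+1)) = 0 := by ext; simp [hs₀]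
    have hL₀ : L (w i₀) = a 0 := by
      rw [hi₀]; show a s₀.castSucc = _; rw [hz]
    rw [hL₀] at h1
    obtain ⟨t, ht⟩ := hLa (w ⟨0, hnm⟩)
    have h2 : a 0 ≤ a t := ha.monotone (Fin.zero_le t)
    rw [ht] at h1 ⊢; linarith
  -- last piece ends at a (last n)
  have hC : R (w ⟨n+m-1, by omega⟩) = a (Fin.last n) := by
    set ilast : Fin (n+m) := ⟨n+m-1, by omega⟩ with hilast
    set s₁ : Fin n := ⟨n-1, by omega⟩ with hs₁
    have hs₁succ : s₁.succ = Fin.last n := by ext; simp [hs₁]; omega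
    obtain ⟨i₀, hi₀⟩ := surj (Sum.inl s₁)
    have hle : i₀ ≤ ilast := by
      rw [Fin.le_def]; have := i₀.isLt; simp [hilast]; omega
    rcases key i₀ ilast hle with hlt | ⟨heq, hR⟩
    · obtain ⟨t, ht⟩ := hLa (w ilast)
      have hLi₀ : L (w i₀) = a s₁.castSucc := by rw [hi₀]; rfl
      rw [hLi₀, ht] at hlt
      have h1 : s₁.castSucc < t := ha.lt_iff_lt.mp hlt
      have htl : t = Fin.last n := by
        rw [Fin.lt_def] at h1; ext; have := t.isLt; simp [hs₁] at h1 ⊢; omega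
      have h2 := hLR (w ilast)
      have h3 := hRle (w ilast)
      rw [ht, htl] at h2
      linarith
    · have hRi₀ : R (w i₀) = a (Fin.last n) := by
        rw [hi₀]; show a s₁.succ = _; rw [hs₁succ]
      rw [hRi₀] at hR
      have h3 := hRle (w ilast)
      linarith
  -- the subdivision
  set u : Fin (n+m+1) → ℝ :=
    (fun i => if h : (i : ℕ) < n + m then L (w ⟨(i : ℕ), h⟩) else a (Fin.last n)) with hu
  have hcs : ∀ i : Fin (n+m), u i.castSucc = L (w i) := by
    intro i
    rw [hu]; dsimp only
    rw [dif_pos (by simpa using i.isLt)]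
    congr 1
  have hsc : ∀ i : Fin (n+m), u i.succ = R (w i) := by
    intro i
    rw [hu]; dsimp only
    by_cases h : (i : ℕ) + 1 < n + m
    · rw [dif_pos (by simpa using h)]
      have := (chain i ⟨(i : ℕ) + 1, h⟩ rfl).symm
      convert this using 3
      simp
    · rw [dif_neg (by simpa using h)]
      have hi : i = ⟨n+m-1, by omega⟩ := by ext; have := i.isLt; simp; omega
      rw [hi, hC]
  refine ⟨u, w, ?_, ?_, ?_, fun i => ⟨hcs i, hsc i⟩⟩
  · rw [Fin.monotone_iff_le_succ]
    intro i
    calc u i.castSucc = L (w i) := hcs i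
      _ ≤ R (w i) := hLR (w i)
      _ = u i.succ := (hsc i).symm
  · rw [hu]; dsimp only
    rw [dif_pos (by simpa using hnm)]
    convert hB using 3
    simp
  · rw [hu]; dsimp only
    rw [dif_neg (by simp)]


lemma station_to_cut {k : ℕ} {P Q : ℝ → EuclideanSpace ℝ (Fin 2)} {ε : ℝ}
    (h : CertStation k P Q ε) : CertCut k P Q ε := by
  obtain ⟨p, q, hp, hq, hpq, a, b, ha, hb, ha0, ha1, hb0, hb1, hPst, hQst⟩ := h
  choose J hJ using hPst
  choose I hI using hQst
  obtain ⟨u0, wP, huM, hu0, hu1, hupc⟩ := side p q hp a ha I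
  obtain ⟨v0, wQ, hvM, hv0, hv1, hvpc⟩ := side q p hq b hb J
  have hk1 : p + q = k := hpq
  have hk2 : q + p = k := by omega
  have hk1' : k + 1 = p + q + 1 := by omega
  have hk2' : k + 1 = q + p + 1 := by omega
  set u : Fin (k+1) → ℝ := fun i => u0 (Fin.cast hk1' i) with hu
  set v : Fin (k+1) → ℝ := fun i => v0 (Fin.cast hk2' i) with hv
  set π : Equiv.Perm (Fin k) :=
    ((finCongr hk1.symm).trans (wP.trans ((Equiv.sumComm (Fin p) (Fin q)).trans
      (wQ.symm.trans (finCongr hk2))))) with hπ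
  refine ⟨u, v, ?_, ?_, ?_, ?_, ?_, ?_, π, ?_⟩
  · exact fun x y hxy => huM (by rw [Fin.le_def, Fin.coe_cast, Fin.coe_cast]; exact hxy)
  · exact fun x y hxy => hvM (by rw [Fin.le_def, Fin.coe_cast, Fin.coe_cast]; exact hxy)
  · rw [hu]; dsimp only
    have h0 : Fin.cast hk1' (0 : Fin (k+1)) = 0 := by ext; simp
    rw [h0, hu0, ha0]
  · rw [hu]; dsimp only
    have hl : Fin.cast hk1' (Fin.last k) = Fin.last (p+q) := by ext; simp [hk1]
    rw [hl, hu1, ha1]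
  · rw [hv]; dsimp only
    have h0 : Fin.cast hk2' (0 : Fin (k+1)) = 0 := by ext; simp
    rw [h0, hv0, hb0]
  · rw [hv]; dsimp only
    have hl : Fin.cast hk2' (Fin.last k) = Fin.last (q+p) := by ext; simp [hk2]
    rw [hl, hv1, hb1]
  · intro i
    set iP : Fin (p+q) := Fin.cast hk1.symm i with hiP
    set jQ : Fin (q+p) := wQ.symm (Equiv.sumComm (Fin p) (Fin q) (wP iP)) with hjQ
    have hπval : ((π i : Fin k) : ℕ) = (jQ : ℕ) := by
      rw [hπ]; simp [hjQ, hiP, finCongr]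
    have hucs : u i.castSucc = u0 iP.castSucc := by
      rw [hu]; dsimp only; congr 1
    have husc : u i.succ = u0 iP.succ := by
      rw [hu]; dsimp only; congr 1
    have hvcs : v (π i).castSucc = v0 jQ.castSucc := by
      rw [hv]; dsimp only; congr 1
    have hvsc : v (π i).succ = v0 jQ.succ := by
      rw [hv]; dsimp only; congr 1
    have hWQ : wQ jQ = Equiv.sumComm (Fin p) (Fin q) (wP iP) := by
      rw [hjQ, Equiv.apply_symm_apply]
    rcases hcase : wP iP with s | j
    · -- proper piece of P matched with station point on Q
      have hU1 : u i.castSucc = a s.castSucc := by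
        rw [hucs, (hupc iP).1, hcase]
        try rfl
      have hU2 : u i.succ = a s.succ := by
        rw [husc, (hupc iP).2, hcase]
        try rfl
      have hWQ' : wQ jQ = Sum.inr s := by rw [hWQ, hcase]; rfl
      have hV1 : v (π i).castSucc = b (J s).succ := by
        rw [hvcs, (hvpc jQ).1, hWQ']
        try rfl
      have hV2 : v (π i).succ = b (J s).succ := by
        rw [hvsc, (hvpc jQ).2, hWQ']
        try rfl
      have hd : (0:ℝ) < a s.succ - a s.castSucc :=
        sub_pos.mpr (ha ((Fin.castSucc_lt_succ : s.castSucc < s.succ)))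
      refine ⟨fun t => (a s.succ - a s.castSucc) * t + a s.castSucc,
        fun _ => b (J s).succ, ?_, continuousOn_const, ?_, monotoneOn_const, ?_, ?_, ?_⟩
      · exact ((continuous_const.mul continuous_id).add continuous_const).continuousOn
      · refine Monotone.monotoneOn (fun x y hxy => ?_) _
        have := mul_le_mul_of_nonneg_left hxy hd.le
        simpa using add_le_add_right this (a s.castSucc)
      · rw [hU1, hU2]
        simpa using Set.image_affine_Icc' hd (a s.castSucc) 0 1
      · rw [hV1, hV2, Icc_self]
        exact Set.Nonempty.image_const (nonempty_Icc.mpr zero_le_one) _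
      · intro t ht
        have h1 : (0:ℝ) ≤ (a s.succ - a s.castSucc) * t := mul_nonneg hd.le ht.1
        have h2 : (a s.succ - a s.castSucc) * t ≤ (a s.succ - a s.castSucc) * 1 :=
          mul_le_mul_of_nonneg_left ht.2 hd.le
        refine hJ s ((a s.succ - a s.castSucc) * t + a s.castSucc)
          ⟨by linarith, by linarith⟩
    · -- station point on P matched with proper piece of Q
      have hU1 : u i.castSucc = a (I j).succ := by
        rw [hucs, (hupc iP).1, hcase]
        try rfl
      have hU2 : u i.succ = a (I j).succ := by
        rw [husc, (hupc iP).2, hcase]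
        try rfl
      have hWQ' : wQ jQ = Sum.inl j := by rw [hWQ, hcase]; rfl
      have hV1 : v (π i).castSucc = b j.castSucc := by
        rw [hvcs, (hvpc jQ).1, hWQ']
        try rfl
      have hV2 : v (π i).succ = b j.succ := by
        rw [hvsc, (hvpc jQ).2, hWQ']
        try rfl
      have hd : (0:ℝ) < b j.succ - b j.castSucc :=
        sub_pos.mpr (hb ((Fin.castSucc_lt_succ : j.castSucc < j.succ)))
      refine ⟨fun _ => a (I j).succ,
        fun t => (b j.succ - b j.castSucc) * t + b j.castSucc,
        continuousOn_const, ?_, monotoneOn_const, ?_, ?_, ?_, ?_⟩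
      · exact ((continuous_const.mul continuous_id).add continuous_const).continuousOn
      · refine Monotone.monotoneOn (fun x y hxy => ?_) _
        have := mul_le_mul_of_nonneg_left hxy hd.le
        simpa using add_le_add_right this (b j.castSucc)
      · rw [hU1, hU2, Icc_self]
        exact Set.Nonempty.image_const (nonempty_Icc.mpr zero_le_one) _
      · rw [hV1, hV2]
        simpa using Set.image_affine_Icc' hd (b j.castSucc) 0 1
      · intro t ht
        have h1 : (0:ℝ) ≤ (b j.succ - b j.castSucc) * t := mul_nonneg hd.le ht.1
        have h2 : (b j.succ - b j.castSucc) * t ≤ (b j.succ - b j.castSucc) * 1 :=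
          mul_le_mul_of_nonneg_left ht.2 hd.le
        refine hI j ((b j.succ - b j.castSucc) * t + b j.castSucc)
          ⟨by linarith, by linarith⟩

end Stmt10Aux

/-- the `k`-Fréchet (cut) distance is at most the `k`-station distance. -/
theorem stmt_10 (k : ℕ) (P Q : ℝ → EuclideanSpace ℝ (Fin 2))
    (hP : ContinuousOn P (Set.Icc 0 1)) (hQ : ContinuousOn Q (Set.Icc 0 1)) :
    dcut k P Q ≤ dstation k P Q :=
  le_iInf₂ fun ε hε => iInf₂_le ε ⟨hε.1, Stmt10Aux.station_to_cut hε.2⟩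
end

section
/- Let γ : [0,1] → [0,1]² be a path that is a concatenation of finitely many axis-parallel segments, monotonically nondecreasing in both coordinates, with γ(0) = (0,0) and γ(1) = (1,1), and suppose γ stays in the free space F_ε(P,Q) of curves P and Q. Then for every δ > 0 there exists a strictly increasing (in both coordinates) continuous path from (0,0) to (1,1) contained in F_{ε+δ}(P,Q); consequently the Fréchet distance satisfies δ_F(P,Q) ≤ ε + δ for every δ > 0, hence δ_F(P,Q) ≤ ε. -/
open Set

noncomputable def stairF (N : ℕ) (w : ℕ → ℝ) (t : ℝ) : ℝ :=
  w 0 + ∑ j ∈ Finset.range N, (w (j+1) - w j) * (max 0 (min 1 ((N:ℝ) * t - j)))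

lemma stairF_continuous (N : ℕ) (w : ℕ → ℝ) : Continuous (stairF N w) := by
  unfold stairF
  apply continuous_const.add
  apply continuous_finset_sum
  intro j _
  exact continuous_const.mul (continuous_const.max ((continuous_const.min
    (((continuous_const.mul continuous_id)).sub continuous_const))))

lemma stairF_monotone (N : ℕ) (w : ℕ → ℝ) (hw : ∀ j < N, w j ≤ w (j+1)) :
    Monotone (stairF N w) := by
  intro a b hab
  unfold stairF
  apply add_le_add le_rfl
  apply Finset.sum_le_sum
  intro j hj
  apply mul_le_mul_of_nonneg_left _ (sub_nonneg.2 (hw j (Finset.mem_range.1 hj)))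
  apply max_le_max le_rfl
  apply min_le_min le_rfl
  have : (N:ℝ) * a ≤ (N:ℝ) * b := by
    apply mul_le_mul_of_nonneg_left hab (Nat.cast_nonneg N)
  linarith

lemma stairF_eval (N : ℕ) (w : ℕ → ℝ) (i : ℕ) (hi : i < N) (t : ℝ)
    (h1 : (i:ℝ) ≤ N * t) (h2 : (N:ℝ) * t ≤ i + 1) :
    stairF N w t = w i + ((N:ℝ) * t - i) * (w (i+1) - w i) := by
  unfold stairF
  rw [Finset.range_eq_Ico, ← Finset.sum_Ico_consecutive _ (Nat.zero_le (i+1)) hi,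
    ← Finset.range_eq_Ico, Finset.sum_range_succ]
  have hz : ∑ j ∈ Finset.Ico (i+1) N, (w (j+1) - w j) * (max 0 (min 1 ((N:ℝ) * t - j))) = 0 := by
    apply Finset.sum_eq_zero
    intro j hj
    have hj' : (i:ℝ) + 1 ≤ j := by exact_mod_cast (Finset.mem_Ico.1 hj).1
    have : max 0 (min 1 ((N:ℝ) * t - j)) = 0 := by
      apply max_eq_left
      exact le_trans (min_le_right _ _) (by linarith)
    rw [this, mul_zero]
  rw [hz, add_zero]
  have hone : ∀ j ∈ Finset.range i, (w (j+1) - w j) * (max 0 (min 1 ((N:ℝ) * t - j)))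
      = w (j+1) - w j := by
    intro j hj
    have hj' : (j:ℝ) + 1 ≤ i := by exact_mod_cast Finset.mem_range.1 hj
    have : max 0 (min 1 ((N:ℝ) * t - j)) = 1 := by
      rw [min_eq_left (by linarith), max_eq_right (by norm_num)]
    rw [this, mul_one]
  rw [Finset.sum_congr rfl hone, Finset.sum_range_sub]
  have : max 0 (min 1 ((N:ℝ) * t - i)) = (N:ℝ) * t - i := by
    rw [min_eq_right (by linarith), max_eq_right (by linarith)]
  rw [this]
  ring

lemma stairF_zero (N : ℕ) (w : ℕ → ℝ) : stairF N w 0 = w 0 := by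
  unfold stairF
  have : ∀ j ∈ Finset.range N, (w (j+1) - w j) * (max 0 (min 1 ((N:ℝ) * 0 - j))) = 0 := by
    intro j _
    have : max 0 (min 1 ((N:ℝ) * 0 - j)) = 0 := by
      apply max_eq_left
      exact le_trans (min_le_right _ _) (by simp)
    rw [this, mul_zero]
  rw [Finset.sum_congr rfl this, Finset.sum_const_zero, add_zero]

lemma stairF_one (N : ℕ) (w : ℕ → ℝ) : stairF N w 1 = w N := by
  unfold stairF
  have : ∀ j ∈ Finset.range N, (w (j+1) - w j) * (max 0 (min 1 ((N:ℝ) * 1 - j))) =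
      w (j+1) - w j := by
    intro j hj
    have hj' : (j:ℝ) + 1 ≤ N := by exact_mod_cast Finset.mem_range.1 hj
    have : max 0 (min 1 ((N:ℝ) * 1 - j)) = 1 := by
      rw [min_eq_left (by linarith), max_eq_right (by norm_num)]
    rw [this, mul_one]
  rw [Finset.sum_congr rfl this, Finset.sum_range_sub]
  ring

/-- For `t ∈ [0,1]` there's an index `i < N` with `i ≤ N t ≤ i+1`. -/
lemma exists_index (N : ℕ) (hN : 0 < N) (t : ℝ) (ht : t ∈ Icc (0:ℝ) 1) :
    ∃ i : ℕ, i < N ∧ (i:ℝ) ≤ N * t ∧ (N:ℝ) * t ≤ i + 1 := by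
  obtain ⟨ht0, ht1⟩ := ht
  have hNt0 : 0 ≤ (N:ℝ) * t := by positivity
  have hNtN : (N:ℝ) * t ≤ N := by nlinarith [Nat.cast_nonneg (α := ℝ) N]
  refine ⟨min (Nat.floor ((N:ℝ) * t)) (N - 1), ?_, ?_, ?_⟩
  · omega
  · rcases le_or_gt (Nat.floor ((N:ℝ) * t)) (N-1) with h | h
    · rw [min_eq_left h]; exact Nat.floor_le hNt0
    · rw [min_eq_right h.le]
      have h1 : ((N-1:ℕ):ℝ) ≤ (Nat.floor ((N:ℝ) * t) : ℝ) := by exact_mod_cast h.le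
      linarith [Nat.floor_le hNt0]
  · rcases le_or_gt (Nat.floor ((N:ℝ) * t)) (N-1) with h | h
    · rw [min_eq_left h]
      exact (Nat.lt_floor_add_one _).le
    · rw [min_eq_right h.le]
      have h1 : ((N-1:ℕ):ℝ) = (N:ℝ) - 1 := by
        rw [Nat.cast_sub hN]; simp
      rw [h1]; linarith
noncomputable def wcoord (N : ℕ) (z : Fin (N + 1) → ℝ × ℝ) (n : ℕ) : ℝ × ℝ :=
  z ⟨min n N, Nat.lt_succ_of_le (min_le_right n N)⟩

lemma wcoord_eq (N : ℕ) (z : Fin (N + 1) → ℝ × ℝ) (j : ℕ) (hj : j ≤ N) :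
    wcoord N z j = z ⟨j, Nat.lt_succ_of_le hj⟩ := by
  unfold wcoord
  congr 1
  exact Fin.ext (by simp [min_eq_left hj])

lemma wcoord_castSucc (N : ℕ) (z : Fin (N + 1) → ℝ × ℝ) (j : ℕ) (hj : j < N) :
    wcoord N z j = z ((⟨j, hj⟩ : Fin N).castSucc) :=
  (wcoord_eq N z j hj.le).trans (congrArg z (Fin.ext rfl))

lemma wcoord_succ (N : ℕ) (z : Fin (N + 1) → ℝ × ℝ) (j : ℕ) (hj : j < N) :
    wcoord N z (j + 1) = z ((⟨j, hj⟩ : Fin N).succ) :=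
  (wcoord_eq N z (j + 1) hj).trans (congrArg z (Fin.ext rfl))

/-- If a monotone axis-parallel staircase path (given by its corner points `z`)
from `(0,0)` to `(1,1)` lies in the free space `F_ε(P,Q)`, then for every `δ > 0` there is a
strictly monotone continuous path from `(0,0)` to `(1,1)` inside `F_{ε+δ}(P,Q)`; consequently
the Fréchet distance of `P` and `Q` is at most `ε`. -/
theorem stmt_11 (P Q : ℝ → EuclideanSpace ℝ (Fin 2))
    (hP : ContinuousOn P (Icc 0 1)) (hQ : ContinuousOn Q (Icc 0 1))
    (ε : ℝ) (hε : 0 ≤ ε)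
    (N : ℕ) (z : Fin (N + 1) → ℝ × ℝ)
    (hz0 : z 0 = (0, 0)) (hzN : z (Fin.last N) = (1, 1))
    (hmono : ∀ i : Fin N, (z i.castSucc).1 ≤ (z i.succ).1 ∧ (z i.castSucc).2 ≤ (z i.succ).2)
    (haxis : ∀ i : Fin N, (z i.castSucc).1 = (z i.succ).1 ∨ (z i.castSucc).2 = (z i.succ).2)
    (hfree : ∀ i : Fin N, ∀ x ∈ segment ℝ (z i.castSucc) (z i.succ),
      x.1 ∈ Icc (0:ℝ) 1 ∧ x.2 ∈ Icc (0:ℝ) 1 ∧ dist (P x.1) (Q x.2) ≤ ε) :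
    (∀ δ : ℝ, 0 < δ → ∃ γ : ℝ → ℝ × ℝ,
      ContinuousOn γ (Icc 0 1) ∧ γ 0 = (0, 0) ∧ γ 1 = (1, 1) ∧
      StrictMonoOn (fun t => (γ t).1) (Icc 0 1) ∧
      StrictMonoOn (fun t => (γ t).2) (Icc 0 1) ∧
      ∀ t ∈ Icc (0:ℝ) 1, (γ t).1 ∈ Icc (0:ℝ) 1 ∧ (γ t).2 ∈ Icc (0:ℝ) 1 ∧
        dist (P (γ t).1) (Q (γ t).2) ≤ ε + δ) ∧
    sInf {r : ℝ | ∃ σ τ : ℝ → ℝ,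
      ContinuousOn σ (Icc 0 1) ∧ ContinuousOn τ (Icc 0 1) ∧
      MonotoneOn σ (Icc 0 1) ∧ MonotoneOn τ (Icc 0 1) ∧
      σ '' Icc 0 1 = Icc 0 1 ∧ τ '' Icc 0 1 = Icc 0 1 ∧
      ∀ t ∈ Icc (0:ℝ) 1, dist (P (σ t)) (Q (τ t)) ≤ r} ≤ ε := by
  -- N is positive
  have hN : 0 < N := by
    rcases Nat.eq_zero_or_pos N with h | h
    · exfalso
      subst h
      have : z (Fin.last 0) = z 0 := congrArg z (Fin.ext rfl)
      rw [hz0, hzN] at this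
      exact one_ne_zero (congrArg Prod.fst this)
    · exact h
  set w1 : ℕ → ℝ := fun n => (wcoord N z n).1 with hw1def
  set w2 : ℕ → ℝ := fun n => (wcoord N z n).2 with hw2def
  set σ : ℝ → ℝ := stairF N w1 with hσdef
  set τ : ℝ → ℝ := stairF N w2 with hτdef
  -- endpoint values
  have hw10 : w1 0 = 0 := by
    rw [hw1def]; simp only; rw [wcoord_eq N z 0 (Nat.zero_le N)]
    rw [show (⟨0, Nat.lt_succ_of_le (Nat.zero_le N)⟩ : Fin (N+1)) = 0 from Fin.ext rfl, hz0]
  have hw20 : w2 0 = 0 := by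
    rw [hw2def]; simp only; rw [wcoord_eq N z 0 (Nat.zero_le N)]
    rw [show (⟨0, Nat.lt_succ_of_le (Nat.zero_le N)⟩ : Fin (N+1)) = 0 from Fin.ext rfl, hz0]
  have hw1N : w1 N = 1 := by
    rw [hw1def]; simp only; rw [wcoord_eq N z N le_rfl]
    rw [show (⟨N, Nat.lt_succ_of_le le_rfl⟩ : Fin (N+1)) = Fin.last N from Fin.ext rfl, hzN]
  have hw2N : w2 N = 1 := by
    rw [hw2def]; simp only; rw [wcoord_eq N z N le_rfl]
    rw [show (⟨N, Nat.lt_succ_of_le le_rfl⟩ : Fin (N+1)) = Fin.last N from Fin.ext rfl, hzN]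
  -- monotonicity of corner coordinates
  have hwm : ∀ j, j < N → w1 j ≤ w1 (j+1) ∧ w2 j ≤ w2 (j+1) := by
    intro j hj
    have h := hmono ⟨j, hj⟩
    rw [hw1def, hw2def]; simp only
    rw [wcoord_castSucc N z j hj, wcoord_succ N z j hj]
    exact h
  have Mσ : Monotone σ := stairF_monotone N w1 (fun j hj => (hwm j hj).1)
  have Mτ : Monotone τ := stairF_monotone N w2 (fun j hj => (hwm j hj).2)
  have Cσ : Continuous σ := stairF_continuous N w1
  have Cτ : Continuous τ := stairF_continuous N w2
  have hσ0 : σ 0 = 0 := (stairF_zero N w1).trans hw10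
  have hτ0 : τ 0 = 0 := (stairF_zero N w2).trans hw20
  have hσ1 : σ 1 = 1 := (stairF_one N w1).trans hw1N
  have hτ1 : τ 1 = 1 := (stairF_one N w2).trans hw2N
  -- the path lies in the free space
  have key : ∀ t ∈ Icc (0:ℝ) 1, ∃ i : Fin N,
      (σ t, τ t) ∈ segment ℝ (z i.castSucc) (z i.succ) := by
    intro t ht
    obtain ⟨i, hiN, h1, h2⟩ := exists_index N hN t ht
    refine ⟨⟨i, hiN⟩, ?_⟩
    set s : ℝ := (N:ℝ) * t - i with hs
    have hs0 : 0 ≤ s := by rw [hs]; linarith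
    have hs1 : s ≤ 1 := by rw [hs]; linarith
    refine ⟨1 - s, s, by linarith, hs0, by ring, ?_⟩
    have e1 := stairF_eval N w1 i hiN t h1 h2
    have e2 := stairF_eval N w2 i hiN t h1 h2
    have a1 : (z ((⟨i,hiN⟩:Fin N).castSucc)).1 = w1 i := by
      rw [← wcoord_castSucc N z i hiN]
    have a2 : (z ((⟨i,hiN⟩:Fin N).castSucc)).2 = w2 i := by
      rw [← wcoord_castSucc N z i hiN]
    have a3 : (z ((⟨i,hiN⟩:Fin N).succ)).1 = w1 (i+1) := by
      rw [← wcoord_succ N z i hiN]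
    have a4 : (z ((⟨i,hiN⟩:Fin N).succ)).2 = w2 (i+1) := by
      rw [← wcoord_succ N z i hiN]
    have : (1 - s) • z ((⟨i,hiN⟩:Fin N).castSucc) + s • z ((⟨i,hiN⟩:Fin N).succ)
        = ((1-s) * w1 i + s * w1 (i+1), (1-s) * w2 i + s * w2 (i+1)) := by
      rw [Prod.ext_iff]
      constructor
      · show (1-s) * (z _).1 + s * (z _).1 = _
        rw [a1, a3]
      · show (1-s) * (z _).2 + s * (z _).2 = _
        rw [a2, a4]
    rw [this, Prod.ext_iff]
    constructor
    · show _ = σ t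
      rw [hσdef]; simp only; rw [e1, ← hs]; ring
    · show _ = τ t
      rw [hτdef]; simp only; rw [e2, ← hs]; ring
  have main : ∀ t ∈ Icc (0:ℝ) 1,
      σ t ∈ Icc (0:ℝ) 1 ∧ τ t ∈ Icc (0:ℝ) 1 ∧ dist (P (σ t)) (Q (τ t)) ≤ ε := by
    intro t ht
    obtain ⟨i, hseg⟩ := key t ht
    exact hfree i _ hseg
  clear_value σ τ w1 w2
  constructor
  · -- strictly monotone perturbation
    intro δ hδ
    have hPu : UniformContinuousOn P (Icc 0 1) :=
      isCompact_Icc.uniformContinuousOn_of_continuous hP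
    have hQu : UniformContinuousOn Q (Icc 0 1) :=
      isCompact_Icc.uniformContinuousOn_of_continuous hQ
    obtain ⟨ηP, hηP, HP⟩ := Metric.uniformContinuousOn_iff_le.mp hPu (δ/2) (by linarith)
    obtain ⟨ηQ, hηQ, HQ⟩ := Metric.uniformContinuousOn_iff_le.mp hQu (δ/2) (by linarith)
    set c : ℝ := min (1/2) (min ηP ηQ) with hc
    have hc0 : 0 < c := lt_min (by norm_num) (lt_min hηP hηQ)
    have hc1 : c ≤ 1/2 := min_le_left _ _
    have hcP : c ≤ ηP := le_trans (min_le_right _ _) (min_le_left _ _)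
    have hcQ : c ≤ ηQ := le_trans (min_le_right _ _) (min_le_right _ _)
    refine ⟨fun t => ((1-c) * σ t + c * t, (1-c) * τ t + c * t), ?_, ?_, ?_, ?_, ?_, ?_⟩
    · exact (((continuous_const.mul Cσ).add (continuous_const.mul continuous_id)).prodMk
        ((continuous_const.mul Cτ).add (continuous_const.mul continuous_id))).continuousOn
    · simp [hσ0, hτ0]
    · show ((1-c) * σ 1 + c * 1, (1-c) * τ 1 + c * 1) = (1, 1)
      rw [hσ1, hτ1]; norm_num
    · intro a _ b _ hab
      simp only
      have h1 : (1-c) * σ a ≤ (1-c) * σ b :=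
        mul_le_mul_of_nonneg_left (Mσ hab.le) (by linarith)
      have h2 : c * a < c * b := by nlinarith
      linarith
    · intro a _ b _ hab
      simp only
      have h1 : (1-c) * τ a ≤ (1-c) * τ b :=
        mul_le_mul_of_nonneg_left (Mτ hab.le) (by linarith)
      have h2 : c * a < c * b := by nlinarith
      linarith
    · intro t ht
      obtain ⟨⟨hσl, hσu⟩, ⟨hτl, hτu⟩, hd⟩ := main t ht
      obtain ⟨ht0, ht1⟩ := ht
      have m1 : (1-c) * σ t + c * t ∈ Icc (0:ℝ) 1 := by
        constructor
        · nlinarith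
        · nlinarith
      have m2 : (1-c) * τ t + c * t ∈ Icc (0:ℝ) 1 := by
        constructor
        · nlinarith
        · nlinarith
      refine ⟨m1, m2, ?_⟩
      have d1 : dist ((1-c) * σ t + c * t) (σ t) ≤ ηP := by
        rw [Real.dist_eq]
        have : (1-c) * σ t + c * t - σ t = c * (t - σ t) := by ring
        rw [this, abs_mul, abs_of_pos hc0]
        have h9 : |t - σ t| ≤ 1 := by rw [abs_le]; constructor <;> linarith
        have h10 : c * |t - σ t| ≤ c * 1 := mul_le_mul_of_nonneg_left h9 hc0.le
        linarith
      have d2 : dist ((1-c) * τ t + c * t) (τ t) ≤ ηQ := by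
        rw [Real.dist_eq]
        have : (1-c) * τ t + c * t - τ t = c * (t - τ t) := by ring
        rw [this, abs_mul, abs_of_pos hc0]
        have h9 : |t - τ t| ≤ 1 := by rw [abs_le]; constructor <;> linarith
        have h10 : c * |t - τ t| ≤ c * 1 := mul_le_mul_of_nonneg_left h9 hc0.le
        linarith
      have hdP : dist (P ((1-c) * σ t + c * t)) (P (σ t)) ≤ δ/2 :=
        HP _ m1 _ ⟨hσl, hσu⟩ d1
      have hdQ : dist (Q (τ t)) (Q ((1-c) * τ t + c * t)) ≤ δ/2 := by
        rw [dist_comm]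
        exact HQ _ m2 _ ⟨hτl, hτu⟩ d2
      calc dist (P ((1-c) * σ t + c * t)) (Q ((1-c) * τ t + c * t))
          ≤ dist (P ((1-c) * σ t + c * t)) (P (σ t)) + dist (P (σ t)) (Q (τ t))
            + dist (Q (τ t)) (Q ((1-c) * τ t + c * t)) := dist_triangle4 _ _ _ _
        _ ≤ δ/2 + ε + δ/2 := by gcongr
        _ = ε + δ := by ring
  · -- the Fréchet distance bound
    apply csInf_le
    · refine ⟨0, fun r hr => ?_⟩
      obtain ⟨σ', τ', _, _, _, _, _, _, h⟩ := hr
      exact le_trans dist_nonneg (h 0 ⟨le_rfl, zero_le_one⟩)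
    · refine ⟨σ, τ, Cσ.continuousOn, Cτ.continuousOn, Mσ.monotoneOn _, Mτ.monotoneOn _,
        ?_, ?_, fun t ht => (main t ht).2.2⟩
      · apply Subset.antisymm
        · rintro x ⟨t, ht, rfl⟩
          exact ⟨hσ0 ▸ Mσ ht.1, hσ1 ▸ Mσ ht.2⟩
        · have := intermediate_value_Icc (zero_le_one (α := ℝ)) Cσ.continuousOn
          rw [hσ0, hσ1] at this
          exact this
      · apply Subset.antisymm
        · rintro x ⟨t, ht, rfl⟩
          exact ⟨hτ0 ▸ Mτ ht.1, hτ1 ▸ Mτ ht.2⟩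
        · have := intermediate_value_Icc (zero_le_one (α := ℝ)) Cτ.continuousOn
          rw [hτ0, hτ1] at this
          exact this
end

section
/- Let K ⊂ ℝ² be a compact convex set such that every boundary point p of K admits a horizontal segment H_p ⊆ K and a vertical segment V_p ⊆ K, both containing p, with ‖H_p‖ + ‖V_p‖ ≥ c for a fixed constant c > 0. Let a, b ∈ K with a ≤ b coordinatewise. Then the greedy staircase construction — starting at a and alternately appending a maximal horizontal segment rightward and a maximal vertical segment upward within K, clipped so as not to exceed b's coordinates — reaches b after at most ⌈2((b₁ − a₁) + (b₂ − a₂))/c⌉ + 4 segments, producing an x- and y-monotone axis-parallel path from a to b inside K. -/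
namespace S14

def Stair (K : Set (ℝ × ℝ)) (p b : ℝ × ℝ) (N : ℕ) (z : Fin (N + 1) → ℝ × ℝ) : Prop :=
  z 0 = p ∧ z (Fin.last N) = b ∧
  (∀ i : Fin N, (z i.castSucc).1 ≤ (z i.succ).1 ∧ (z i.castSucc).2 ≤ (z i.succ).2) ∧
  (∀ i : Fin N, (z i.castSucc).1 = (z i.succ).1 ∨ (z i.castSucc).2 = (z i.succ).2) ∧
  (∀ i : Fin N, segment ℝ (z i.castSucc) (z i.succ) ⊆ K)

lemma stair_nil (K : Set (ℝ × ℝ)) (b : ℝ × ℝ) : Stair K b b 0 (fun _ => b) :=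
  ⟨rfl, rfl, fun i => i.elim0, fun i => i.elim0, fun i => i.elim0⟩

lemma stair_cons (K : Set (ℝ × ℝ)) (p q b : ℝ × ℝ) (N : ℕ) (z : Fin (N + 1) → ℝ × ℝ)
    (h : Stair K q b N z) (h1 : p.1 ≤ q.1) (h2 : p.2 ≤ q.2)
    (hax : p.1 = q.1 ∨ p.2 = q.2) (hseg : segment ℝ p q ⊆ K) :
    Stair K p b (N + 1) (Fin.cases p z) := by
  obtain ⟨hz0, hzl, hmono, haxis, hsegs⟩ := h
  have hone : (Fin.cases p z (1 : Fin (N + 2)) : ℝ × ℝ) = q := by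
    rw [← Fin.succ_zero_eq_one, Fin.cases_succ, hz0]
  refine ⟨by simp, ?_, ?_, ?_, ?_⟩
  · rw [← Fin.succ_last]
    exact hzl
  · intro i
    induction i using Fin.cases with
    | zero => simpa [hone] using ⟨h1, h2⟩
    | succ j =>
      have e : (Fin.succ j).castSucc = (j.castSucc).succ := by
        exact Fin.ext rfl
      rw [e]
      simpa using hmono j
  · intro i
    induction i using Fin.cases with
    | zero => simpa [hone] using hax
    | succ j =>
      have e : (Fin.succ j).castSucc = (j.castSucc).succ := by
        exact Fin.ext rfl
      rw [e]
      simpa using haxis j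
  · intro i
    induction i using Fin.cases with
    | zero => simpa [hone] using hseg
    | succ j =>
      have e : (Fin.succ j).castSucc = (j.castSucc).succ := by
        exact Fin.ext rfl
      rw [e]
      simpa using hsegs j

lemma comb_mem {K : Set (ℝ × ℝ)} (hKconv : Convex ℝ K) {u v : ℝ × ℝ}
    (hu : u ∈ K) (hv : v ∈ K) (t : ℝ) (h0 : 0 ≤ t) (h1 : t ≤ 1) :
    ((1 - t) * u.1 + t * v.1, (1 - t) * u.2 + t * v.2) ∈ K := by
  have h := hKconv hu hv (a := 1 - t) (b := t) (by linarith) h0 (by ring)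
  have e : (1 - t) • u + t • v = (((1 - t) * u.1 + t * v.1, (1 - t) * u.2 + t * v.2) : ℝ × ℝ) := by
    ext <;> simp
  rwa [e] at h

lemma vert_mem {K : Set (ℝ × ℝ)} (hKconv : Convex ℝ K) {x y1 y2 y : ℝ}
    (hu : (x, y1) ∈ K) (hv : (x, y2) ∈ K) (ha : y1 ≤ y) (hb : y ≤ y2) :
    (x, y) ∈ K := by
  rcases eq_or_lt_of_le (ha.trans hb) with heq | hlt
  · have : y = y1 := le_antisymm (heq ▸ hb) ha
    rwa [this]
  · set t := (y - y1) / (y2 - y1) with ht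
    have h0 : 0 ≤ t := div_nonneg (by linarith) (by linarith)
    have h1 : t ≤ 1 := by
      rw [div_le_one (by linarith)]; linarith
    have h := comb_mem hKconv hu hv t h0 h1
    have key : t * (y2 - y1) = y - y1 := div_mul_cancel₀ _ (by linarith : y2 - y1 ≠ 0)
    have e1 : (1 - t) * x + t * x = x := by ring
    have e2 : (1 - t) * y1 + t * y2 = y := by nlinarith [key]
    simpa [e1, e2] using h

lemma horiz_mem {K : Set (ℝ × ℝ)} (hKconv : Convex ℝ K) {y x1 x2 x : ℝ}
    (hu : (x1, y) ∈ K) (hv : (x2, y) ∈ K) (ha : x1 ≤ x) (hb : x ≤ x2) :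
    (x, y) ∈ K := by
  rcases eq_or_lt_of_le (ha.trans hb) with heq | hlt
  · have : x = x1 := le_antisymm (heq ▸ hb) ha
    rwa [this]
  · set t := (x - x1) / (x2 - x1) with ht
    have h0 : 0 ≤ t := div_nonneg (by linarith) (by linarith)
    have h1 : t ≤ 1 := by
      rw [div_le_one (by linarith)]; linarith
    have h := comb_mem hKconv hu hv t h0 h1
    have key : t * (x2 - x1) = x - x1 := div_mul_cancel₀ _ (by linarith : x2 - x1 ≠ 0)
    have e1 : (1 - t) * y + t * y = y := by ring
    have e2 : (1 - t) * x1 + t * x2 = x := by nlinarith [key]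
    simpa [e1, e2] using h

lemma exists_topmost {K : Set (ℝ × ℝ)} (hKc : IsCompact K) {p : ℝ × ℝ} (hp : p ∈ K) :
    ∃ t : ℝ, p.2 ≤ t ∧ (p.1, t) ∈ K ∧ ∀ y, (p.1, y) ∈ K → y ≤ t := by
  set S : Set ℝ := {y | (p.1, y) ∈ K} with hS
  have hcl : IsClosed S := hKc.isClosed.preimage (by fun_prop : Continuous fun y : ℝ => (p.1, y))
  have hbdd : BddAbove S := by
    have : S ⊆ Prod.snd '' K := fun y hy => ⟨(p.1, y), hy, rfl⟩
    exact ((hKc.image continuous_snd).bddAbove).mono this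
  have hne : S.Nonempty := ⟨p.2, hp⟩
  exact ⟨sSup S, le_csSup hbdd hp, hcl.csSup_mem hne hbdd, fun y hy => le_csSup hbdd hy⟩

lemma exists_rightmost {K : Set (ℝ × ℝ)} (hKc : IsCompact K) {p : ℝ × ℝ} (hp : p ∈ K) :
    ∃ t : ℝ, p.1 ≤ t ∧ (t, p.2) ∈ K ∧ ∀ x, (x, p.2) ∈ K → x ≤ t := by
  set S : Set ℝ := {x | (x, p.2) ∈ K} with hS
  have hcl : IsClosed S := hKc.isClosed.preimage (by fun_prop : Continuous fun x : ℝ => (x, p.2))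
  have hbdd : BddAbove S := by
    have : S ⊆ Prod.fst '' K := fun x hx => ⟨(x, p.2), hx, rfl⟩
    exact ((hKc.image continuous_fst).bddAbove).mono this
  have hne : S.Nonempty := ⟨p.1, hp⟩
  exact ⟨sSup S, le_csSup hbdd hp, hcl.csSup_mem hne hbdd, fun x hx => le_csSup hbdd hx⟩

lemma cross_up {K : Set (ℝ × ℝ)} (hKconv : Convex ℝ K) {p b : ℝ × ℝ} (hb : b ∈ K)
    (hright : ∀ x, (x, p.2) ∈ K → x ≤ p.1) (h1 : p.1 < b.1) (h2 : p.2 < b.2) :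
    ∀ y, (p.1, y) ∈ K → p.2 ≤ y := by
  intro y hy
  by_contra hlt
  push_neg at hlt
  set t := (p.2 - y) / (b.2 - y) with ht
  have h0 : 0 < t := div_pos (by linarith) (by linarith)
  have h1t : t < 1 := by
    rw [div_lt_one (by linarith)]; linarith
  have h := comb_mem hKconv hy hb t h0.le h1t.le
  have key : t * (b.2 - y) = p.2 - y := div_mul_cancel₀ _ (by linarith : b.2 - y ≠ 0)
  have e2 : (1 - t) * ((p.1, y) : ℝ × ℝ).2 + t * b.2 = p.2 := by
    simp only; nlinarith [key]
  rw [e2] at h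
  have := hright _ h
  simp only at this
  nlinarith

lemma cross_right {K : Set (ℝ × ℝ)} (hKconv : Convex ℝ K) {p b : ℝ × ℝ} (hb : b ∈ K)
    (htop : ∀ y, (p.1, y) ∈ K → y ≤ p.2) (h1 : p.1 ≤ b.1) (h2 : p.2 < b.2) :
    ∀ x, (x, p.2) ∈ K → p.1 ≤ x := by
  intro x hx
  by_contra hlt
  push_neg at hlt
  set t := (p.1 - x) / (b.1 - x) with ht
  have h0 : 0 < t := div_pos (by linarith) (by linarith)
  have h1t : t ≤ 1 := by
    rw [div_le_one (by linarith)]; linarith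
  have h := comb_mem hKconv hx hb t h0.le h1t
  have key : t * (b.1 - x) = p.1 - x := div_mul_cancel₀ _ (by linarith : b.1 - x ≠ 0)
  have e1 : (1 - t) * ((x, p.2) : ℝ × ℝ).1 + t * b.1 = p.1 := by
    simp only; nlinarith [key]
  rw [e1] at h
  have := htop _ h
  simp only at this
  nlinarith

lemma mem_frontier_of_rightmost {K : Set (ℝ × ℝ)} (hKc : IsCompact K) {q : ℝ × ℝ}
    (hq : q ∈ K) (hmax : ∀ x, (x, q.2) ∈ K → x ≤ q.1) : q ∈ frontier K := by
  rw [hKc.isClosed.frontier_eq]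
  refine ⟨hq, fun hint => ?_⟩
  rw [mem_interior_iff_mem_nhds, Metric.mem_nhds_iff] at hint
  obtain ⟨ε, hε, hball⟩ := hint
  have hmem : ((q.1 + ε / 2, q.2) : ℝ × ℝ) ∈ K := by
    apply hball
    simp [Metric.mem_ball, Prod.dist_eq, Real.dist_eq, abs_of_nonneg, hε.le]
    exact hε
  have := hmax _ hmem
  linarith

lemma step {K : Set (ℝ × ℝ)} (hKc : IsCompact K) (hKconv : Convex ℝ K) {c : ℝ} (hc : 0 < c)
    (hbd : ∀ p ∈ frontier K, ∃ x₁ x₂ y₁ y₂ : ℝ,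
      x₁ ≤ p.1 ∧ p.1 ≤ x₂ ∧ y₁ ≤ p.2 ∧ p.2 ≤ y₂ ∧
      (Set.Icc x₁ x₂ ×ˢ ({p.2} : Set ℝ)) ⊆ K ∧
      (({p.1} : Set ℝ) ×ˢ Set.Icc y₁ y₂) ⊆ K ∧
      c ≤ (x₂ - x₁) + (y₂ - y₁))
    {b : ℝ × ℝ} (hb : b ∈ K) :
    ∀ n : ℕ, ∀ p : ℝ × ℝ, p ∈ K → p.1 ≤ b.1 → p.2 ≤ b.2 →
      (∀ y, (p.1, y) ∈ K → y ≤ p.2) →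
      (b.1 - p.1) + (b.2 - p.2) ≤ n * c →
      ∃ (N : ℕ) (z : Fin (N + 1) → ℝ × ℝ), N ≤ 2 * n + 2 ∧ Stair K p b N z := by
  intro n
  induction n with
  | zero =>
    intro p hp hp1 hp2 _ hsum
    have hpe : p = b := by
      push_cast at hsum
      exact Prod.ext (by linarith) (by linarith)
    subst hpe
    exact ⟨0, fun _ => p, by omega, stair_nil K p⟩
  | succ n ih =>
    intro p hp hp1 hp2 htop hsum
    have hp' : ((p.1, p.2) : ℝ × ℝ) ∈ K := by rwa [Prod.mk.eta]
    by_cases hpb2 : b.2 ≤ p.2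
    · -- finish with one horizontal segment
      have he : p.2 = b.2 := le_antisymm hp2 hpb2
      exact ⟨1, Fin.cases p (fun _ => b), by omega,
        stair_cons K p b b 0 (fun _ => b) (stair_nil K b) hp1 hp2 (Or.inr he)
          (hKconv.segment_subset hp hb)⟩
    · push_neg at hpb2
      obtain ⟨X, hX1, hX2, hX3⟩ := exists_rightmost hKc hp
      by_cases hXb : b.1 ≤ X
      · -- clipped horizontally: p → (b.1, p.2) → b
        have hq : ((b.1, p.2) : ℝ × ℝ) ∈ K := horiz_mem hKconv hp' hX2 hp1 hXb
        refine ⟨2, Fin.cases p (Fin.cases (b.1, p.2) (fun _ => b)), by omega, ?_⟩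
        refine stair_cons K p (b.1, p.2) b 1 _ ?_ hp1 le_rfl (Or.inr rfl)
          (hKconv.segment_subset hp hq)
        exact stair_cons K (b.1, p.2) b b 0 (fun _ => b) (stair_nil K b) le_rfl hpb2.le
          (Or.inl rfl) (hKconv.segment_subset hq hb)
      · push_neg at hXb
        -- q = (X, p.2) is rightmost at its height and lies on the frontier
        have hXmax : ∀ x, (x, ((X, p.2) : ℝ × ℝ).2) ∈ K → x ≤ ((X, p.2) : ℝ × ℝ).1 := hX3
        have hfr : ((X, p.2) : ℝ × ℝ) ∈ frontier K :=
          mem_frontier_of_rightmost hKc hX2 hXmax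
        obtain ⟨x₁, x₂, y₁, y₂, hx₁q, hqx₂, hy₁q, hqy₂, hH, hV, hlen⟩ := hbd _ hfr
        simp only at hx₁q hqx₂ hy₁q hqy₂ hlen
        have hx₁x₂ : x₁ ≤ x₂ := hx₁q.trans hqx₂
        have hy₁y₂ : y₁ ≤ y₂ := hy₁q.trans hqy₂
        have hx₂X : x₂ ≤ X := hX3 x₂ (hH ⟨⟨hx₁x₂, le_rfl⟩, rfl⟩)
        have hpx₁ : p.1 ≤ x₁ := cross_right hKconv hb htop hp1 hpb2 x₁ (hH ⟨⟨le_rfl, hx₁x₂⟩, rfl⟩)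
        have hqy₁ : p.2 ≤ y₁ :=
          cross_up hKconv hb hXmax (by simpa using hXb) (by simpa using hpb2) y₁
            (hV ⟨rfl, ⟨le_rfl, hy₁y₂⟩⟩)
        obtain ⟨T, hT1, hT2, hT3⟩ := exists_topmost hKc hX2
        simp only at hT1 hT2 hT3
        have hy₂T : y₂ ≤ T := hT3 y₂ (hV ⟨rfl, ⟨hy₁y₂, le_rfl⟩⟩)
        by_cases hTb : b.2 ≤ T
        · -- clipped vertically: p → (X, p.2) → (X, b.2) → b
          have hm : ((X, b.2) : ℝ × ℝ) ∈ K := vert_mem hKconv hX2 hT2 hpb2.le hTb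
          refine ⟨3, Fin.cases p (Fin.cases (X, p.2) (Fin.cases (X, b.2) (fun _ => b))),
            by omega, ?_⟩
          refine stair_cons K p (X, p.2) b 2 _ ?_ hX1 le_rfl (Or.inr rfl)
            (hKconv.segment_subset hp hX2)
          refine stair_cons K (X, p.2) (X, b.2) b 1 _ ?_ le_rfl hpb2.le (Or.inl rfl)
            (hKconv.segment_subset hX2 hm)
          exact stair_cons K (X, b.2) b b 0 (fun _ => b) (stair_nil K b) hXb.le le_rfl
            (Or.inr rfl) (hKconv.segment_subset hm hb)
        · push_neg at hTb
          -- full pair: advance to p' = (X, T), with (X - p.1) + (T - p.2) ≥ c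
          have htop' : ∀ y, (((X, T) : ℝ × ℝ).1, y) ∈ K → y ≤ ((X, T) : ℝ × ℝ).2 := hT3
          have hsum' : (b.1 - ((X, T) : ℝ × ℝ).1) + (b.2 - ((X, T) : ℝ × ℝ).2) ≤ n * c := by
            simp only
            push_cast at hsum
            linarith
          obtain ⟨N, z, hN, hst⟩ := ih (X, T) hT2 hXb.le hTb.le htop' hsum'
          refine ⟨N + 2, Fin.cases p (Fin.cases (X, p.2) z), by omega, ?_⟩
          refine stair_cons K p (X, p.2) b (N + 1) _ ?_ hX1 le_rfl (Or.inr rfl)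
            (hKconv.segment_subset hp hX2)
          exact stair_cons K (X, p.2) (X, T) b N z hst le_rfl hT1 (Or.inl rfl)
            (hKconv.segment_subset hX2 hT2)

end S14

open S14 in
/-- In a compact convex set `K ⊂ ℝ²` in which every boundary point admits
horizontal and vertical segments through it inside `K` of total length at least `c > 0`,
any two points `a ≤ b` (coordinatewise) of `K` can be joined by an `x`- and `y`-monotone
axis-parallel staircase path inside `K` using at most
`⌈2((b₁ − a₁) + (b₂ − a₂))/c⌉ + 4` segments. -/
theorem stmt_14 (K : Set (ℝ × ℝ)) (hKc : IsCompact K) (hKconv : Convex ℝ K)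
    (c : ℝ) (hc : 0 < c)
    (hbd : ∀ p ∈ frontier K, ∃ x₁ x₂ y₁ y₂ : ℝ,
      x₁ ≤ p.1 ∧ p.1 ≤ x₂ ∧ y₁ ≤ p.2 ∧ p.2 ≤ y₂ ∧
      (Set.Icc x₁ x₂ ×ˢ ({p.2} : Set ℝ)) ⊆ K ∧
      (({p.1} : Set ℝ) ×ˢ Set.Icc y₁ y₂) ⊆ K ∧
      c ≤ (x₂ - x₁) + (y₂ - y₁))
    (a b : ℝ × ℝ) (ha : a ∈ K) (hb : b ∈ K) (h1 : a.1 ≤ b.1) (h2 : a.2 ≤ b.2) :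
    ∃ (N : ℕ) (z : Fin (N + 1) → ℝ × ℝ),
      N ≤ ⌈2 * ((b.1 - a.1) + (b.2 - a.2)) / c⌉₊ + 4 ∧
      z 0 = a ∧ z (Fin.last N) = b ∧
      (∀ i : Fin N, (z i.castSucc).1 ≤ (z i.succ).1 ∧ (z i.castSucc).2 ≤ (z i.succ).2) ∧
      (∀ i : Fin N, (z i.castSucc).1 = (z i.succ).1 ∨ (z i.castSucc).2 = (z i.succ).2) ∧
      (∀ i : Fin N, segment ℝ (z i.castSucc) (z i.succ) ⊆ K) := by
  set Δ : ℝ := (b.1 - a.1) + (b.2 - a.2) with hΔ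
  have hΔ0 : 0 ≤ Δ := by simp only [hΔ]; linarith
  have ha' : ((a.1, a.2) : ℝ × ℝ) ∈ K := by rwa [Prod.mk.eta]
  obtain ⟨T, hT1, hT2, hT3⟩ := exists_topmost hKc ha
  by_cases hTb : b.2 ≤ T
  · -- a → (a.1, b.2) → b, two segments
    have hm : ((a.1, b.2) : ℝ × ℝ) ∈ K := vert_mem hKconv ha' hT2 h2 hTb
    refine ⟨2, Fin.cases a (Fin.cases (a.1, b.2) (fun _ => b)), by omega, ?_⟩
    refine stair_cons K a (a.1, b.2) b 1 _ ?_ le_rfl h2 (Or.inl rfl)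
      (hKconv.segment_subset ha hm)
    exact stair_cons K (a.1, b.2) b b 0 (fun _ => b) (stair_nil K b) h1 le_rfl
      (Or.inr rfl) (hKconv.segment_subset hm hb)
  · push_neg at hTb
    set n : ℕ := ⌈Δ / c⌉₊ with hn
    have hdn : Δ / c ≤ n := Nat.le_ceil _
    have hΔn : Δ ≤ n * c := by
      rw [div_le_iff₀ hc] at hdn
      linarith
    have hsum : (b.1 - ((a.1, T) : ℝ × ℝ).1) + (b.2 - ((a.1, T) : ℝ × ℝ).2) ≤ n * c := by
      simp only
      linarith
    have htop : ∀ y, (((a.1, T) : ℝ × ℝ).1, y) ∈ K → y ≤ ((a.1, T) : ℝ × ℝ).2 := hT3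
    obtain ⟨N, z, hN, hst⟩ := step hKc hKconv hc hbd hb n (a.1, T) hT2 h1 hTb.le htop hsum
    refine ⟨N + 1, Fin.cases a z, ?_, ?_⟩
    · -- counting: N + 1 ≤ ⌈2Δ/c⌉₊ + 4
      set m : ℕ := ⌈2 * Δ / c⌉₊ with hm
      have h2m : 2 * Δ / c ≤ m := Nat.le_ceil _
      have hhalf : Δ / c ≤ ((m + 1) / 2 : ℕ) := by
        have hcast : (m : ℝ) ≤ 2 * ((m + 1) / 2 : ℕ) := by
          have : m ≤ 2 * ((m + 1) / 2) := by omega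
          exact_mod_cast this
        have e : 2 * Δ / c = 2 * (Δ / c) := by ring
        rw [e] at h2m
        linarith
      have hn2 : n ≤ (m + 1) / 2 := Nat.ceil_le.mpr hhalf
      have : 2 * n ≤ m + 1 := by omega
      omega
    · exact stair_cons K a (a.1, T) b N z hst le_rfl hT1 (Or.inl rfl)
        (hKconv.segment_subset ha hT2)
end
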